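/- For all positive integers $d,\delta$ and all integers $m\ge n\ge 1$, $\mathbf P\{d\mid B_n\text{ and }\delta\mid B_m\} = \frac{1}{d\delta}\sum_{j=0}^{d-1}\sum_{h=0}^{\delta-1} e^{i\pi(\frac{j}{d}n+\frac{h}{\delta}m)}\,\cos^{n}\!\big(\pi(\tfrac{j}{d}+\tfrac{h}{\delta})\big)\,\cos^{m-n}\!\big(\tfrac{\pi h}{\delta}\big)$. -/

import Mathlib

open MeasureTheory ProbabilityTheory Finset Real

noncomputable section

open scoped ENNReal

lemma root_filter (d a : ℕ) (hd : 0 < d) :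
    ∑ j ∈ Finset.range d, (Complex.exp (2 * (Real.pi : ℂ) * Complex.I * (j : ℂ) / d)) ^ a
      = if d ∣ a then (d : ℂ) else 0 := by
  set z : ℂ := Complex.exp (2 * (Real.pi : ℂ) * Complex.I * (a : ℂ) / d) with hzdef
  have hterm : ∀ j : ℕ, (Complex.exp (2 * (Real.pi : ℂ) * Complex.I * (j : ℂ) / d)) ^ a = z ^ j := by
    intro j
    rw [hzdef, ← Complex.exp_nat_mul, ← Complex.exp_nat_mul]
    ring_nf
  rw [Finset.sum_congr rfl fun j _ => hterm j]
  by_cases hdvd : d ∣ a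
  · obtain ⟨k, rfl⟩ := hdvd
    have hz1 : z = 1 := by
      rw [hzdef]
      have : (2 * (Real.pi : ℂ) * Complex.I * ((d * k : ℕ) : ℂ) / d) = (k : ℕ) * (2 * Real.pi * Complex.I) := by
        have hd' : (d : ℂ) ≠ 0 := Nat.cast_ne_zero.mpr hd.ne'
        push_cast
        field_simp
      rw [this, Complex.exp_nat_mul_two_pi_mul_I]
    rw [if_pos ⟨k, rfl⟩]
    simp [hz1]
  · have hz1 : z ≠ 1 := by
      intro h
      rw [hzdef, Complex.exp_eq_one_iff] at h
      obtain ⟨k, hk⟩ := h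
      have hd' : (d : ℂ) ≠ 0 := Nat.cast_ne_zero.mpr hd.ne'
      have hpi : (Real.pi : ℂ) ≠ 0 := Complex.ofReal_ne_zero.mpr Real.pi_ne_zero
      have hI : Complex.I ≠ 0 := Complex.I_ne_zero
      have h2 : (2:ℂ) * Real.pi * Complex.I ≠ 0 := by
        simp [hpi, Complex.I_ne_zero]
      have : (a : ℂ) = (d : ℂ) * (k : ℂ) := by
        field_simp at hk
        have hk' : (2*(Real.pi:ℂ)*Complex.I) * a = (2*(Real.pi:ℂ)*Complex.I) * ((d:ℂ)*(k:ℂ)) := by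
          linear_combination (2*(Real.pi:ℂ)*Complex.I) * hk
        exact mul_left_cancel₀ h2 hk'
      have : (a : ℤ) = (d : ℤ) * k := by
        exact_mod_cast this
      exact hdvd (Int.natCast_dvd_natCast.mp ⟨k, by exact_mod_cast this⟩)
    rw [geom_sum_eq hz1]
    have hzd : z ^ d = 1 := by
      rw [hzdef, ← Complex.exp_nat_mul]
      have hd' : (d : ℂ) ≠ 0 := Nat.cast_ne_zero.mpr hd.ne'
      have : (d : ℂ) * (2 * (Real.pi : ℂ) * Complex.I * (a : ℂ) / d) = (a : ℕ) * (2 * Real.pi * Complex.I) := by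
        field_simp
      rw [this, Complex.exp_nat_mul_two_pi_mul_I]
    rw [hzd]
    simp [hdvd]

lemma term_eq (x : ℝ) : Complex.exp (Complex.I * (Real.pi : ℂ) * (x : ℂ)) * ((Real.cos (Real.pi * x) : ℝ) : ℂ)
    = (1 + Complex.exp (2 * (Real.pi : ℂ) * Complex.I * (x : ℂ))) / 2 := by
  rw [Complex.ofReal_cos, Complex.ofReal_mul, Complex.cos]
  rw [← mul_div_assoc, mul_add, ← Complex.exp_add, ← Complex.exp_add]
  have h1 : Complex.I * (Real.pi:ℂ) * x + (Real.pi:ℂ) * x * Complex.I = 2 * (Real.pi:ℂ) * Complex.I * x := by ring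
  have h2 : Complex.I * (Real.pi:ℂ) * x + -((Real.pi:ℂ) * x) * Complex.I = 0 := by ring
  rw [h1, h2, Complex.exp_zero]
  ring

lemma term_pow (d δ n m j h : ℕ) (hnm : n ≤ m) :
    Complex.exp (Complex.I * (Real.pi : ℂ) *
        ((j : ℂ) / (d : ℂ) * (n : ℂ) + (h : ℂ) / (δ : ℂ) * (m : ℂ)))
      * ((Real.cos (Real.pi * ((j : ℝ) / (d : ℝ) + (h : ℝ) / (δ : ℝ))) : ℂ)) ^ n
      * ((Real.cos (Real.pi * (h : ℝ) / (δ : ℝ)) : ℂ)) ^ (m - n)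
    = ((1 + Complex.exp (2 * (Real.pi : ℂ) * Complex.I * ((j : ℂ) / d)) *
          Complex.exp (2 * (Real.pi : ℂ) * Complex.I * ((h : ℂ) / δ))) / 2) ^ n *
      ((1 + Complex.exp (2 * (Real.pi : ℂ) * Complex.I * ((h : ℂ) / δ))) / 2) ^ (m - n) := by
  set x : ℝ := (j : ℝ) / (d : ℝ) + (h : ℝ) / (δ : ℝ) with hx
  set y : ℝ := (h : ℝ) / (δ : ℝ) with hy
  have hxc : (x : ℂ) = (j : ℂ) / d + (h : ℂ) / δ := by rw [hx, hy]; push_cast; ring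
  have hyc : (y : ℂ) = (h : ℂ) / δ := by rw [hy]; push_cast; ring
  have hcos2 : Real.pi * (h : ℝ) / (δ : ℝ) = Real.pi * y := by rw [hy]; ring
  have hexp : Complex.exp (Complex.I * (Real.pi : ℂ) *
        ((j : ℂ) / (d : ℂ) * (n : ℂ) + (h : ℂ) / (δ : ℂ) * (m : ℂ)))
      = Complex.exp (Complex.I * (Real.pi : ℂ) * (x : ℂ)) ^ n *
        Complex.exp (Complex.I * (Real.pi : ℂ) * (y : ℂ)) ^ (m - n) := by
    rw [← Complex.exp_nat_mul, ← Complex.exp_nat_mul, ← Complex.exp_add]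
    congr 1
    rw [hxc, hyc]
    have : ((m - n : ℕ) : ℂ) = (m : ℂ) - (n : ℂ) := by
      push_cast [Nat.cast_sub hnm]; ring
    rw [this]
    ring
  rw [hcos2, hexp]
  have key : ∀ z : ℝ, Complex.exp (Complex.I * (Real.pi : ℂ) * (z : ℂ)) * ((Real.cos (Real.pi * z) : ℝ) : ℂ)
      = (1 + Complex.exp (2 * (Real.pi : ℂ) * Complex.I * (z : ℂ))) / 2 := term_eq
  calc Complex.exp (Complex.I * ↑Real.pi * ↑x) ^ n * Complex.exp (Complex.I * ↑Real.pi * ↑y) ^ (m - n) *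
        ((Real.cos (Real.pi * x) : ℝ) : ℂ) ^ n * ((Real.cos (Real.pi * y) : ℝ) : ℂ) ^ (m - n)
      = (Complex.exp (Complex.I * ↑Real.pi * ↑x) * ((Real.cos (Real.pi * x) : ℝ) : ℂ)) ^ n *
        (Complex.exp (Complex.I * ↑Real.pi * ↑y) * ((Real.cos (Real.pi * y) : ℝ) : ℂ)) ^ (m - n) := by
        rw [mul_pow, mul_pow]; ring
    _ = ((1 + Complex.exp (2 * (Real.pi : ℂ) * Complex.I * (x : ℂ))) / 2) ^ n *
        ((1 + Complex.exp (2 * (Real.pi : ℂ) * Complex.I * (y : ℂ))) / 2) ^ (m - n) := by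
        rw [key x, key y]
    _ = _ := by
        rw [hxc, hyc, mul_add, Complex.exp_add]

lemma pow_expand (u v : ℂ) (n m : ℕ) (hnm : n ≤ m) :
    ((1 + u * v) / 2) ^ n * ((1 + v) / 2) ^ (m - n)
      = (1 / 2 : ℂ) ^ m * ∑ t ∈ (Finset.range m).powerset,
          u ^ ((t ∩ Finset.range n).card) * v ^ t.card := by
  have h2 : ((2 : ℂ)) ^ n * 2 ^ (m - n) = 2 ^ m := by
    rw [← pow_add, Nat.add_sub_cancel' hnm]
  have step1 : ((1 + u * v) / 2) ^ n * ((1 + v) / 2) ^ (m - n)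
      = (1 / 2 : ℂ) ^ m * ((1 + u * v) ^ n * (1 + v) ^ (m - n)) := by
    rw [div_pow, div_pow, div_pow, one_pow, div_mul_div_comm, h2]
    ring
  rw [step1]
  congr 1
  set w : ℕ → ℂ := fun i => if i < n then u * v else v with hw
  have p1 : ∏ i ∈ Finset.range n, (w i + 1) = (u * v + 1) ^ n := by
    rw [Finset.prod_eq_pow_card (b := u * v + 1) (fun i hi => by
      simp [hw, Finset.mem_range.mp hi]), Finset.card_range]
  have p2 : ∏ i ∈ Finset.Ico n m, (w i + 1) = (v + 1) ^ (m - n) := by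
    rw [Finset.prod_eq_pow_card (b := v + 1) (fun i hi => by
      simp [hw, not_lt.mpr (Finset.mem_Ico.mp hi).1]), Nat.card_Ico]
  have step2 : (1 + u * v) ^ n * (1 + v) ^ (m - n) = ∏ i ∈ Finset.range m, (w i + 1) := by
    rw [← Finset.prod_range_mul_prod_Ico (fun i => w i + 1) hnm, p1, p2]
    ring
  rw [step2, Finset.prod_add]
  refine Finset.sum_congr rfl fun t ht => ?_
  have e1 : ∏ i ∈ t.filter (· < n), w i = (u * v) ^ (t.filter (· < n)).card := by
    rw [Finset.prod_eq_pow_card (b := u * v) (fun i hi => by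
      simp [hw, (Finset.mem_filter.mp hi).2])]
  have e2 : ∏ i ∈ t.filter (fun i => ¬ i < n), w i = v ^ (t.filter (fun i => ¬ i < n)).card := by
    rw [Finset.prod_eq_pow_card (b := v) (fun i hi => by
      simp [hw, (Finset.mem_filter.mp hi).2])]
  have hwt : ∏ i ∈ t, w i = u ^ ((t ∩ Finset.range n).card) * v ^ t.card := by
    rw [← Finset.prod_filter_mul_prod_filter_not t (· < n) w]
    have hcard : (t.filter (· < n)).card + (t.filter (fun i => ¬ i < n)).card = t.card :=
      Finset.card_filter_add_card_filter_not _
    have hinter : t ∩ Finset.range n = t.filter (· < n) := by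
      ext i; simp [Finset.mem_range, and_comm]
    rw [e1, e2, hinter, mul_pow, ← hcard, pow_add]
    ring
  rw [hwt]
  simp


lemma prob_side {Ω : Type*} [MeasurableSpace Ω] (P : Measure Ω) [IsProbabilityMeasure P]
    (b : ℕ → Ω → ℕ) (hmeas : ∀ i, Measurable (b i))
    (hindep : iIndepFun b P)
    (h0 : ∀ i, P {ω | b i ω = 0} = 1/2) (h1 : ∀ i, P {ω | b i ω = 1} = 1/2)
    (B : ℕ → Ω → ℕ) (hB : ∀ n ω, B n ω = ∑ i ∈ Finset.range n, b (i + 1) ω)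
    (d δ n m : ℕ) (hnm : n ≤ m) :
    P {ω | d ∣ B n ω ∧ δ ∣ B m ω}
      = ∑ t ∈ (Finset.range m).powerset,
          if d ∣ (t ∩ Finset.range n).card ∧ δ ∣ t.card then ((2:ℝ≥0∞))⁻¹ ^ m else 0 := by
  classical
  set A : Finset ℕ → Set Ω :=
    fun t => ⋂ i ∈ Finset.range m, {ω | b (i+1) ω = if i ∈ t then 1 else 0} with hA
  have hAmeas : ∀ t, MeasurableSet (A t) := by
    intro t
    refine MeasurableSet.biInter (Set.to_countable _) fun i _ => ?_
    exact hmeas (i+1) (measurableSet_singleton _)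
  have hPA : ∀ t, P (A t) = (2:ℝ≥0∞)⁻¹ ^ m := by
    intro t
    have hre : A t = ⋂ i ∈ (Finset.range m).image (· + 1),
        (b i) ⁻¹' {if i - 1 ∈ t then 1 else 0} := by
      rw [hA]
      ext ω
      simp only [Set.mem_iInter, Finset.mem_image, Finset.mem_range, Set.mem_preimage,
        Set.mem_singleton_iff, Set.mem_setOf_eq]
      constructor
      · rintro H i ⟨j, hj, rfl⟩
        simpa using H j hj
      · intro H j hj
        simpa using H (j+1) ⟨j, hj, rfl⟩
    rw [hre, hindep.meas_biInter (fun i _ => ⟨{if i - 1 ∈ t then 1 else 0},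
      measurableSet_singleton _, rfl⟩)]
    rw [Finset.prod_image (by intros a _ b _ h; simp only at h; omega)]
    have hterm : ∀ j ∈ Finset.range m,
        P ((b (j+1)) ⁻¹' {if (j+1) - 1 ∈ t then 1 else 0}) = (2:ℝ≥0∞)⁻¹ := by
      intro j _
      have : (b (j+1)) ⁻¹' {if (j+1) - 1 ∈ t then 1 else 0}
          = {ω | b (j+1) ω = if j ∈ t then 1 else 0} := by
        ext ω; simp
      rw [this]
      by_cases hj : j ∈ t
      · rw [if_pos hj, h1 (j+1), one_div]
      · rw [if_neg hj, h0 (j+1), one_div]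
    rw [Finset.prod_congr rfl hterm, Finset.prod_const, Finset.card_range]
  have hnot : ∀ i, P {ω | b i ω ≠ 0 ∧ b i ω ≠ 1} = 0 := by
    intro i
    have hm0 : MeasurableSet {ω | b i ω = 0} := hmeas i (measurableSet_singleton 0)
    have hm1 : MeasurableSet {ω | b i ω = 1} := hmeas i (measurableSet_singleton 1)
    have hdisj : Disjoint {ω | b i ω = 0} {ω | b i ω = 1} := by
      rw [Set.disjoint_left]
      intro ω hω0 hω1
      simp only [Set.mem_setOf_eq] at hω0 hω1
      omega
    have hu : P ({ω | b i ω = 0} ∪ {ω | b i ω = 1}) = 1 := by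
      rw [measure_union hdisj hm1, h0, h1]
      exact ENNReal.add_halves 1
    have : {ω | b i ω ≠ 0 ∧ b i ω ≠ 1} = ({ω | b i ω = 0} ∪ {ω | b i ω = 1})ᶜ := by
      ext ω; simp [not_or]
    rw [this, prob_compl_eq_zero_iff (hm0.union hm1)]
    exact hu
  have hcompl : P (⋃ t ∈ (Finset.range m).powerset, A t)ᶜ = 0 := by
    have hsub : (⋃ t ∈ (Finset.range m).powerset, A t)ᶜ
        ⊆ ⋃ i ∈ Finset.range m, {ω | b (i+1) ω ≠ 0 ∧ b (i+1) ω ≠ 1} := by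
      intro ω hω
      by_contra hN
      simp only [Set.mem_iUnion, Set.mem_setOf_eq, not_exists, not_and, not_not] at hN
      apply hω
      have hmem : ((Finset.range m).filter (fun i => b (i+1) ω = 1))
          ∈ ((Finset.range m).powerset : Set (Finset ℕ)) := by
        exact Finset.mem_coe.mpr (Finset.mem_powerset.mpr (Finset.filter_subset _ _))
      refine Set.mem_biUnion hmem ?_
      · rw [hA]
        refine Set.mem_biInter fun i hi => ?_
        simp only [Set.mem_setOf_eq, Finset.mem_filter]
        by_cases h1' : b (i+1) ω = 1
        · simp [h1', Finset.mem_range.mp hi]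
        · have h0' : b (i+1) ω = 0 := by
            by_contra h0'
            exact h1' (hN i hi h0')
          simp [h0', h1', Finset.mem_range.mp hi]
    refine le_antisymm (le_trans (measure_mono hsub) ?_) (by simp)
    refine le_trans (measure_biUnion_finset_le _ _) ?_
    simp [hnot]
  have hBval : ∀ t ∈ (Finset.range m).powerset, ∀ ω ∈ A t,
      B n ω = (t ∩ Finset.range n).card ∧ B m ω = t.card := by
    intro t ht ω hω
    rw [hA] at hω
    simp only [Set.mem_iInter, Set.mem_setOf_eq] at hω
    have ht' : t ⊆ Finset.range m := Finset.mem_powerset.mp ht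
    have key : ∀ k, k ≤ m → B k ω = ((Finset.range k).filter (· ∈ t)).card := by
      intro k hk
      rw [hB]
      have : ∀ i ∈ Finset.range k, b (i+1) ω = if i ∈ t then 1 else 0 := by
        intro i hi
        exact hω i (Finset.mem_range.mpr (lt_of_lt_of_le (Finset.mem_range.mp hi) hk))
      rw [Finset.sum_congr rfl this]
      simp [Finset.sum_boole, Finset.filter_mem_eq_inter]
    constructor
    · rw [key n hnm]
      congr 1
      ext i
      simp [Finset.mem_range, and_comm]
    · rw [key m le_rfl]
      have : (Finset.range m).filter (· ∈ t) = t := by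
        rw [Finset.filter_mem_eq_inter]
        exact Finset.inter_eq_right.mpr ht'
      rw [this]
  have hdisjA : ∀ t ∈ (Finset.range m).powerset, ∀ t' ∈ (Finset.range m).powerset,
      t ≠ t' → Disjoint (A t) (A t') := by
    intro t ht t' ht' hne
    have : ∃ i ∈ Finset.range m, ¬ ((i ∈ t) ↔ (i ∈ t')) := by
      by_contra hc
      push_neg at hc
      apply hne
      ext i
      by_cases hi : i ∈ Finset.range m
      · rcases hc i hi with h
        tauto
      · constructor
        · intro h; exact absurd (Finset.mem_powerset.mp ht h) hi
        · intro h; exact absurd (Finset.mem_powerset.mp ht' h) hi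
    obtain ⟨i, hi, hit⟩ := this
    rw [Set.disjoint_left]
    intro ω hω hω'
    rw [hA] at hω hω'
    simp only [Set.mem_iInter, Set.mem_setOf_eq] at hω hω'
    have e1 := hω i hi
    have e2 := hω' i hi
    by_cases h1' : i ∈ t <;> by_cases h2' : i ∈ t' <;> simp_all
  set Ts := (Finset.range m).powerset.filter
    (fun t => d ∣ (t ∩ Finset.range n).card ∧ δ ∣ t.card) with hTs
  have hEU : {ω | d ∣ B n ω ∧ δ ∣ B m ω} ∩ (⋃ t ∈ (Finset.range m).powerset, A t)
      = ⋃ t ∈ Ts, A t := by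
    ext ω
    simp only [Set.mem_inter_iff, Set.mem_iUnion, Set.mem_setOf_eq, hTs, Finset.mem_filter,
      exists_prop]
    constructor
    · rintro ⟨⟨hdn, hdm⟩, t, ht, hω⟩
      obtain ⟨hv1, hv2⟩ := hBval t ht ω hω
      exact ⟨t, ⟨ht, by rw [← hv1]; exact hdn, by rw [← hv2]; exact hdm⟩, hω⟩
    · rintro ⟨t, ⟨ht, hg1, hg2⟩, hω⟩
      obtain ⟨hv1, hv2⟩ := hBval t ht ω hω
      exact ⟨⟨by rw [hv1]; exact hg1, by rw [hv2]; exact hg2⟩, t, ht, hω⟩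
  calc P {ω | d ∣ B n ω ∧ δ ∣ B m ω}
      = P ({ω | d ∣ B n ω ∧ δ ∣ B m ω} ∩ ⋃ t ∈ (Finset.range m).powerset, A t) :=
        (measure_inter_conull hcompl).symm
    _ = P (⋃ t ∈ Ts, A t) := by rw [hEU]
    _ = ∑ t ∈ Ts, P (A t) := by
        refine measure_biUnion_finset ?_ (fun t _ => hAmeas t)
        intro t ht t' ht' hne
        exact hdisjA t (Finset.mem_filter.mp ht).1 t' (Finset.mem_filter.mp ht').1 hne
    _ = ∑ t ∈ Ts, (2:ℝ≥0∞)⁻¹ ^ m := Finset.sum_congr rfl fun t _ => hPA t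
    _ = _ := by rw [hTs, Finset.sum_filter]

/-- the joint characteristic–function formula (2.2)/(2.3):
`P{d ∣ B_n, δ ∣ B_m} = (1/(dδ)) ∑_{j=0}^{d-1} ∑_{h=0}^{δ-1}
  e^{iπ(jn/d + hm/δ)} cos^n(π(j/d + h/δ)) cos^{m-n}(π h/δ)`. -/
theorem prob_joint_dvd_bernoulli_sum_eq_cos_sum
    {Ω : Type*} [MeasurableSpace Ω] (P : Measure Ω) [IsProbabilityMeasure P]
    (b : ℕ → Ω → ℕ) (hmeas : ∀ i, Measurable (b i))
    (hindep : iIndepFun b P)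
    (h0 : ∀ i, P {ω | b i ω = 0} = 1/2) (h1 : ∀ i, P {ω | b i ω = 1} = 1/2)
    (B : ℕ → Ω → ℕ) (hB : ∀ n ω, B n ω = ∑ i ∈ Finset.range n, b (i + 1) ω)
    (d δ n m : ℕ) (hd : 0 < d) (hδ : 0 < δ) (hn : 1 ≤ n) (hnm : n ≤ m) :
    ((P {ω | d ∣ B n ω ∧ δ ∣ B m ω}).toReal : ℂ)
      = (1 / ((d : ℂ) * (δ : ℂ))) * ∑ j ∈ Finset.range d, ∑ h ∈ Finset.range δ,
          Complex.exp (Complex.I * Real.pi *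
              ((j : ℂ) / (d : ℂ) * (n : ℂ) + (h : ℂ) / (δ : ℂ) * (m : ℂ)))
            * ((Real.cos (Real.pi * ((j : ℝ) / (d : ℝ) + (h : ℝ) / (δ : ℝ))) : ℂ)) ^ n
            * ((Real.cos (Real.pi * (h : ℝ) / (δ : ℝ)) : ℂ)) ^ (m - n) := by
  classical
  have hdC : (d : ℂ) ≠ 0 := Nat.cast_ne_zero.mpr hd.ne'
  have hδC : (δ : ℂ) ≠ 0 := Nat.cast_ne_zero.mpr hδ.ne'
  set u : ℕ → ℂ := fun j => Complex.exp (2 * (Real.pi : ℂ) * Complex.I * ((j : ℂ) / d)) with hu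
  set v : ℕ → ℂ := fun h => Complex.exp (2 * (Real.pi : ℂ) * Complex.I * ((h : ℂ) / δ)) with hv
  set a : Finset ℕ → ℕ := fun t => (t ∩ Finset.range n).card with ha
  set good : Finset ℕ → Prop := fun t => d ∣ a t ∧ δ ∣ t.card with hgood
  -- LHS
  have hP := prob_side P b hmeas hindep h0 h1 B hB d δ n m hnm
  have hLHS : ((P {ω | d ∣ B n ω ∧ δ ∣ B m ω}).toReal : ℂ)
      = ∑ t ∈ (Finset.range m).powerset, if good t then (1/2 : ℂ) ^ m else 0 := by
    rw [hP, ENNReal.toReal_sum (fun t _ => by split_ifs <;> simp)]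
    push_cast
    rw [Finset.sum_congr rfl fun t _ => ?_]
    rw [apply_ite ENNReal.toReal, apply_ite (fun r : ℝ => (r : ℂ))]
    norm_num
    exact if_congr Iff.rfl rfl rfl
  rw [hLHS]
  -- RHS
  have hterm : ∀ (j h : ℕ), Complex.exp (Complex.I * Real.pi *
              ((j : ℂ) / (d : ℂ) * (n : ℂ) + (h : ℂ) / (δ : ℂ) * (m : ℂ)))
            * ((Real.cos (Real.pi * ((j : ℝ) / (d : ℝ) + (h : ℝ) / (δ : ℝ))) : ℂ)) ^ n
            * ((Real.cos (Real.pi * (h : ℝ) / (δ : ℝ)) : ℂ)) ^ (m - n)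
      = (1/2 : ℂ) ^ m * ∑ t ∈ (Finset.range m).powerset, u j ^ a t * v h ^ t.card := by
    intro j h
    rw [term_pow d δ n m j h hnm, pow_expand (u j) (v h) n m hnm]
  rw [Finset.sum_congr rfl fun j _ => Finset.sum_congr rfl fun h _ => hterm j h]
  have swap : ∑ j ∈ Finset.range d, ∑ h ∈ Finset.range δ,
        ((1/2 : ℂ) ^ m * ∑ t ∈ (Finset.range m).powerset, u j ^ a t * v h ^ t.card)
      = (1/2 : ℂ) ^ m * ∑ t ∈ (Finset.range m).powerset,
          (∑ j ∈ Finset.range d, u j ^ a t) * (∑ h ∈ Finset.range δ, v h ^ t.card) := by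
    rw [Finset.sum_congr rfl fun j _ => (Finset.mul_sum _ _ _).symm, ← Finset.mul_sum]
    congr 1
    rw [Finset.sum_congr rfl fun j _ => Finset.sum_comm, Finset.sum_comm]
    exact Finset.sum_congr rfl fun t _ => (Finset.sum_mul_sum _ _ _ _).symm
  rw [swap]
  have rootd : ∀ k, ∑ j ∈ Finset.range d, u j ^ k = if d ∣ k then (d : ℂ) else 0 := by
    intro k
    rw [hu]
    simpa only [mul_div_assoc] using root_filter d k hd
  have rootδ : ∀ k, ∑ h ∈ Finset.range δ, v h ^ k = if δ ∣ k then (δ : ℂ) else 0 := by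
    intro k
    rw [hv]
    simpa only [mul_div_assoc] using root_filter δ k hδ
  simp only [rootd, rootδ]
  rw [Finset.mul_sum, Finset.mul_sum]
  refine Finset.sum_congr rfl fun t _ => ?_
  by_cases hg1 : d ∣ a t <;> by_cases hg2 : δ ∣ t.card <;>
    simp only [hgood, hg1, hg2, if_true, if_false, and_true, and_false, true_and, false_and,
      mul_zero, zero_mul, if_neg, not_false_iff]
  field_simp
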